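/- Let R = k[x_{ij}] with the column-permutation action of S_d, J_d the ideal generated by alternating polynomials, and ε the sign character. For every ℓ ≥ 1, the image of the multiplication map from the ℓ-fold tensor power of the space of alternating polynomials to R, i.e., the k-span of products f_1⋯f_ℓ of alternating polynomials together with its R^{S_d}-module structure, equals both the set of elements of J_d^ℓ on which S_d acts by ε^ℓ and the set of elements of J_d^{ℓ−1} on which S_d acts by ε^ℓ. -/
import Mathlib


open MvPolynomial

namespace Stmt3

variable {k : Type*} [Field k] [CharZero k] (n d : ℕ)

/-- The action of a permutation on `k[x_{ij}]` by permuting the columns. -/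
noncomputable def colAct (σ : Equiv.Perm (Fin d)) :
    MvPolynomial (Fin n × Fin d) k →ₐ[k] MvPolynomial (Fin n × Fin d) k :=
  rename (fun p : Fin n × Fin d => (p.1, σ p.2))

/-- The set of alternating polynomials. -/
def Alternating : Set (MvPolynomial (Fin n × Fin d) k) :=
  {f | ∀ σ : Equiv.Perm (Fin d), colAct n d σ f = (Equiv.Perm.sign σ : ℤ) • f}

/-- The subalgebra `R^{S_d}` of multisymmetric polynomials. -/
noncomputable def invariants : Subalgebra k (MvPolynomial (Fin n × Fin d) k) where
  carrier := {f | ∀ σ : Equiv.Perm (Fin d), colAct n d σ f = f}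
  mul_mem' := by
    intro a b ha hb σ
    rw [map_mul, ha σ, hb σ]
  add_mem' := by
    intro a b ha hb σ
    rw [map_add, ha σ, hb σ]
  algebraMap_mem' := by
    intro r σ
    simp [colAct, algebraMap_eq]

/-- The ideal `J_d` generated by the alternating polynomials. -/
noncomputable def Jd : Ideal (MvPolynomial (Fin n × Fin d) k) :=
  Ideal.span (Alternating n d)

set_option linter.unusedSectionVars false

lemma colAct_colAct (σ τ : Equiv.Perm (Fin d)) (f : MvPolynomial (Fin n × Fin d) k) :
    colAct n d σ (colAct n d τ f) = colAct n d (σ * τ) f := by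
  simp only [colAct]; rw [rename_rename]; rfl

lemma sign_sq (σ : Equiv.Perm (Fin d)) : ((Equiv.Perm.sign σ : ℤ)) ^ 2 = 1 := by
  rw [← Units.val_pow_eq_pow_val, Int.units_sq, Units.val_one]

/-- Products of `m` alternating polynomials. -/
def prodSet (m : ℕ) : Set (MvPolynomial (Fin n × Fin d) k) :=
  {x | ∃ fs : Fin m → MvPolynomial (Fin n × Fin d) k,
      (∀ t, fs t ∈ Alternating n d) ∧ x = ∏ t, fs t}

lemma colAct_prodSet {m : ℕ} {g : MvPolynomial (Fin n × Fin d) k} (hg : g ∈ prodSet n d m)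
    (σ : Equiv.Perm (Fin d)) : colAct n d σ g = ((Equiv.Perm.sign σ : ℤ) ^ m) • g := by
  obtain ⟨fs, hfs, rfl⟩ := hg
  rw [map_prod]
  have h1 : ∀ t : Fin m, colAct n d σ (fs t)
      = ((Equiv.Perm.sign σ : ℤ) : MvPolynomial (Fin n × Fin d) k) * fs t := by
    intro t; rw [hfs t σ, zsmul_eq_mul]
  rw [Finset.prod_congr rfl (fun t _ => h1 t), Finset.prod_mul_distrib, Finset.prod_const,
    zsmul_eq_mul, Finset.card_univ, Fintype.card_fin]
  push_cast
  ring

lemma Jd_pow_eq (m : ℕ) : (Jd n d (k := k)) ^ m = Ideal.span (prodSet n d m) := by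
  induction m with
  | zero =>
    rw [pow_zero, Ideal.one_eq_top, eq_comm, Ideal.eq_top_iff_one]
    exact Ideal.subset_span ⟨(fun t => t.elim0), (fun t => t.elim0), by simp⟩
  | succ m ih =>
    rw [pow_succ, ih, Jd, Ideal.span_mul_span']
    refine le_antisymm (Ideal.span_mono ?_) (Ideal.span_le.mpr ?_)
    · rintro x ⟨a, ⟨fs, hfs, rfl⟩, b, hb, rfl⟩
      refine ⟨Fin.cons b fs, ?_, ?_⟩
      · intro t
        refine Fin.cases ?_ ?_ t
        · simpa using hb
        · intro i; simpa using hfs i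
      · rw [Fin.prod_cons, mul_comm]
    · rintro x ⟨fs, hfs, rfl⟩
      rw [Fin.prod_univ_succ, mul_comm]
      exact Ideal.subset_span
        (Set.mul_mem_mul ⟨fun i => fs i.succ, fun i => hfs i.succ, rfl⟩ (hfs 0))

/-- The averaging (Reynolds-type) operator for the character `ε^ℓ`. -/
noncomputable def altAvg (ℓ : ℕ) (f : MvPolynomial (Fin n × Fin d) k) :
    MvPolynomial (Fin n × Fin d) k :=
  (d.factorial : k)⁻¹ • ∑ σ : Equiv.Perm (Fin d),
    ((Equiv.Perm.sign σ : ℤ) ^ ℓ) • colAct n d σ f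

lemma altAvg_fixed {ℓ : ℕ} {f : MvPolynomial (Fin n × Fin d) k}
    (hf : ∀ σ, colAct n d σ f = ((Equiv.Perm.sign σ : ℤ) ^ ℓ) • f) :
    altAvg n d ℓ f = f := by
  have h1 : ∀ σ : Equiv.Perm (Fin d),
      ((Equiv.Perm.sign σ : ℤ) ^ ℓ) • colAct n d σ f = f := by
    intro σ
    rw [hf σ, smul_smul, ← mul_pow, ← sq, sign_sq, one_pow, one_smul]
  rw [altAvg, Finset.sum_congr rfl (fun σ _ => h1 σ), Finset.sum_const, Finset.card_univ,
    Fintype.card_perm, Fintype.card_fin, ← Nat.cast_smul_eq_nsmul k, smul_smul,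
    inv_mul_cancel₀ (Nat.cast_ne_zero.mpr d.factorial_ne_zero), one_smul]

lemma altAvg_add (ℓ : ℕ) (a b : MvPolynomial (Fin n × Fin d) k) :
    altAvg n d ℓ (a + b) = altAvg n d ℓ a + altAvg n d ℓ b := by
  simp [altAvg, smul_add, Finset.sum_add_distrib]

lemma altAvg_zero (ℓ : ℕ) : altAvg n d ℓ (0 : MvPolynomial (Fin n × Fin d) k) = 0 := by
  simp [altAvg]

/-- The alternating projection of a polynomial. -/
noncomputable def altProj (r : MvPolynomial (Fin n × Fin d) k) :
    MvPolynomial (Fin n × Fin d) k :=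
  (d.factorial : k)⁻¹ • ∑ σ : Equiv.Perm (Fin d),
    (Equiv.Perm.sign σ : ℤ) • colAct n d σ r

lemma altProj_mem (r : MvPolynomial (Fin n × Fin d) k) :
    altProj n d r ∈ Alternating n d := by
  intro τ
  rw [altProj, map_smul, map_sum]
  have h1 : ∀ σ : Equiv.Perm (Fin d),
      colAct n d τ ((Equiv.Perm.sign σ : ℤ) • colAct n d σ r)
        = (Equiv.Perm.sign σ : ℤ) • colAct n d (τ * σ) r := by
    intro σ; rw [map_zsmul, colAct_colAct]
  rw [Finset.sum_congr rfl (fun σ _ => h1 σ)]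
  have h2 : ∑ σ : Equiv.Perm (Fin d), (Equiv.Perm.sign σ : ℤ) • colAct n d (τ * σ) r
      = ∑ σ : Equiv.Perm (Fin d),
          ((Equiv.Perm.sign τ : ℤ) * (Equiv.Perm.sign σ : ℤ)) • colAct n d σ r := by
    refine Fintype.sum_equiv (Equiv.mulLeft τ) _ _ ?_
    intro σ
    simp only [Equiv.coe_mulLeft]
    congr 1
    rw [Equiv.Perm.sign_mul]
    push_cast
    rw [← mul_assoc, ← sq, sign_sq _ τ, one_mul]
  rw [h2]
  simp_rw [mul_smul]
  rw [← Finset.smul_sum, smul_comm]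

lemma sign_pow_succ_mul (m : ℕ) (σ : Equiv.Perm (Fin d)) :
    ((Equiv.Perm.sign σ : ℤ)) ^ (m + 1) * ((Equiv.Perm.sign σ : ℤ)) ^ m
      = (Equiv.Perm.sign σ : ℤ) := by
  rw [← pow_add, show m + 1 + m = 2 * m + 1 by ring, pow_succ, pow_mul, sign_sq, one_pow,
    one_mul]

lemma altAvg_mul (m : ℕ) (r g : MvPolynomial (Fin n × Fin d) k)
    (hg : ∀ σ, colAct n d σ g = ((Equiv.Perm.sign σ : ℤ) ^ m) • g) :
    altAvg n d (m + 1) (r * g) = altProj n d r * g := by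
  have h1 : ∀ σ : Equiv.Perm (Fin d),
      ((Equiv.Perm.sign σ : ℤ) ^ (m + 1)) • colAct n d σ (r * g)
        = ((Equiv.Perm.sign σ : ℤ) • colAct n d σ r) * g := by
    intro σ
    rw [map_mul, hg σ, mul_smul_comm, smul_smul, sign_pow_succ_mul, smul_mul_assoc]
  rw [altAvg, Finset.sum_congr rfl (fun σ _ => h1 σ), ← Finset.sum_mul, altProj,
    smul_mul_assoc]

/-- The `ε^ℓ`-isotypic component as a submodule over the invariants. -/
noncomputable def Eiso (ℓ : ℕ) :
    Submodule (invariants n d (k := k)) (MvPolynomial (Fin n × Fin d) k) where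
  carrier := {f | ∀ σ : Equiv.Perm (Fin d),
    colAct n d σ f = ((Equiv.Perm.sign σ : ℤ) ^ ℓ) • f}
  add_mem' := by
    intro a b ha hb σ
    rw [map_add, ha σ, hb σ, smul_add]
  zero_mem' := by
    intro σ
    rw [map_zero, smul_zero]
  smul_mem' := by
    intro c f hf σ
    have hc : colAct n d σ (c : MvPolynomial (Fin n × Fin d) k) = c := c.2 σ
    show colAct n d σ ((c : MvPolynomial (Fin n × Fin d) k) * f)
      = ((Equiv.Perm.sign σ : ℤ) ^ ℓ) • ((c : MvPolynomial (Fin n × Fin d) k) * f)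
    rw [map_mul, hc, hf σ, mul_smul_comm]

lemma mem_span_prodSet {m : ℕ} {f : MvPolynomial (Fin n × Fin d) k}
    (hf : f ∈ (Jd n d (k := k)) ^ m)
    (hiso : ∀ σ, colAct n d σ f = ((Equiv.Perm.sign σ : ℤ) ^ (m + 1)) • f) :
    f ∈ Submodule.span (invariants n d (k := k)) (prodSet n d (m + 1)) := by
  rw [Jd_pow_eq] at hf
  have key : ∀ r : MvPolynomial (Fin n × Fin d) k,
      altAvg n d (m + 1) (r * f)
        ∈ Submodule.span (invariants n d (k := k)) (prodSet n d (m + 1)) := by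
    refine Submodule.span_induction
      (p := fun x _ => ∀ r : MvPolynomial (Fin n × Fin d) k,
        altAvg n d (m + 1) (r * x)
          ∈ Submodule.span (invariants n d (k := k)) (prodSet n d (m + 1)))
      ?_ ?_ ?_ ?_ hf
    · intro x hx r
      obtain ⟨fs, hfs, rfl⟩ := hx
      rw [altAvg_mul n d m r _ (fun σ => colAct_prodSet n d ⟨fs, hfs, rfl⟩ σ)]
      refine Submodule.subset_span ⟨Fin.cons (altProj n d r) fs, ?_, ?_⟩
      · intro t
        refine Fin.cases ?_ ?_ t
        · simpa using altProj_mem n d r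
        · intro i; simpa using hfs i
      · rw [Fin.prod_cons]
    · intro r
      rw [mul_zero, altAvg_zero]
      exact Submodule.zero_mem _
    · intro x y _ _ hx hy r
      rw [mul_add, altAvg_add]
      exact Submodule.add_mem _ (hx r) (hy r)
    · intro a x _ hx r
      rw [smul_eq_mul, ← mul_assoc]
      exact hx (r * a)
  have := key 1
  rwa [one_mul, altAvg_fixed n d hiso] at this

lemma span_le_inf (ℓ : ℕ) :
    Submodule.span (invariants n d (k := k)) (prodSet n d ℓ) ≤
      (Submodule.restrictScalars (invariants n d (k := k)) ((Jd n d (k := k)) ^ ℓ)) ⊓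
        Eiso n d ℓ := by
  rw [Submodule.span_le]
  intro x hx
  refine ⟨?_, ?_⟩
  · show x ∈ (Jd n d (k := k)) ^ ℓ
    rw [Jd_pow_eq]
    exact Ideal.subset_span hx
  · intro σ
    exact colAct_prodSet n d hx σ

/-- For every `ℓ ≥ 1`, the image of the `ℓ`-fold multiplication map on
alternating polynomials — i.e. the `R^{S_d}`-submodule spanned by products `f_1 ⋯ f_ℓ` of
alternating polynomials — equals both the set of elements of `J_d^ℓ` on which `S_d` acts
through `ε^ℓ` and the set of elements of `J_d^{ℓ-1}` on which `S_d` acts through `ε^ℓ`. -/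
theorem image_of_multiplication_map (ℓ : ℕ) (hℓ : 1 ≤ ℓ) :
    ((Submodule.span (invariants n d (k := k))
        {x : MvPolynomial (Fin n × Fin d) k |
          ∃ fs : Fin ℓ → MvPolynomial (Fin n × Fin d) k,
            (∀ t, fs t ∈ Alternating n d) ∧ x = ∏ t, fs t} :
      Submodule (invariants n d (k := k)) (MvPolynomial (Fin n × Fin d) k)) : Set _) =
      {f | f ∈ (Jd n d (k := k)) ^ ℓ ∧
        ∀ σ : Equiv.Perm (Fin d), colAct n d σ f = ((Equiv.Perm.sign σ : ℤ) ^ ℓ) • f} ∧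
    ((Submodule.span (invariants n d (k := k))
        {x : MvPolynomial (Fin n × Fin d) k |
          ∃ fs : Fin ℓ → MvPolynomial (Fin n × Fin d) k,
            (∀ t, fs t ∈ Alternating n d) ∧ x = ∏ t, fs t} :
      Submodule (invariants n d (k := k)) (MvPolynomial (Fin n × Fin d) k)) : Set _) =
      {f | f ∈ (Jd n d (k := k)) ^ (ℓ - 1) ∧
        ∀ σ : Equiv.Perm (Fin d), colAct n d σ f = ((Equiv.Perm.sign σ : ℤ) ^ ℓ) • f} := by
  obtain ⟨m, rfl⟩ : ∃ m, ℓ = m + 1 := ⟨ℓ - 1, (Nat.succ_pred_eq_of_pos hℓ).symm⟩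
  have heasy : ∀ f ∈ Submodule.span (invariants n d (k := k)) (prodSet n d (m + 1)),
      f ∈ (Jd n d (k := k)) ^ (m + 1) ∧
        ∀ σ : Equiv.Perm (Fin d),
          colAct n d σ f = ((Equiv.Perm.sign σ : ℤ) ^ (m + 1)) • f := by
    intro f hf
    have h := span_le_inf n d (m + 1) hf
    exact ⟨h.1, h.2⟩
  constructor
  · ext f
    simp only [Set.mem_setOf_eq, SetLike.mem_coe]
    constructor
    · exact fun h => heasy f h
    · rintro ⟨h1, h2⟩
      exact mem_span_prodSet n d
        (Ideal.pow_le_pow_right (Nat.le_succ m) h1) h2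
  · ext f
    simp only [Set.mem_setOf_eq, SetLike.mem_coe, Nat.add_sub_cancel]
    constructor
    · intro h
      exact ⟨Ideal.pow_le_pow_right (Nat.le_succ m) (heasy f h).1, (heasy f h).2⟩
    · rintro ⟨h1, h2⟩
      exact mem_span_prodSet n d h1 h2

end Stmt3
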